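/- (Joint Lyapunov / small-gain theorem; Theorem 3 of the paper, stated along trajectories.) Let a1, a2, a3, a4, c1, c2, c3, c4 > 0 with c3 < c2, a4·c4/(a3·c1) < 1, and a4·c4/(a3·c3) < c1/(c1+c2), and let σ, σ_ε be of class 𝒦. Then there exist c_ζ > 0, λ_ζ ∈ (0,1), and σ_ζ of class 𝒦, depending only on these data, such that for every collection of sequences ζ : ℕ → ℝ^{p}, ε : ℕ → ℝ^{q}, ω : ℕ → ℝ^{m}, V : ℕ → [0,∞), V_ε : ℕ → [0,∞) satisfying for all k ∈ ℕ: a1‖ζ(k)‖² ≤ V(k) ≤ a2‖ζ(k)‖², V(k+1) ≤ V(k) − a3‖ζ(k)‖² + a4(‖ε(k)‖² + ‖ε(k+1)‖²) + σ(‖ω(k)‖), c1‖ε(k)‖² ≤ V_ε(k) ≤ c2‖ε(k)‖², and V_ε(k+1) ≤ V_ε(k) − c3‖ε(k)‖² + c4‖ζ(k)‖² + σ_ε(‖ω(k)‖), one has √(‖ζ(k)‖² + ‖ε(k)‖²) ≤ c_ζ λ_ζ^k √(‖ζ(0)‖² + ‖ε(0)‖²) + Σ_{i=0}^{k} λ_ζ^i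 σ_ζ(‖ω(k−i)‖) for all k ∈ ℕ. -/

import Mathlib

open scoped BigOperators

noncomputable section

abbrev Vec (n : ℕ) : Type := EuclideanSpace ℝ (Fin n)

/-- Class 𝒦 functions `[0,∞) → [0,∞)`. -/
def IsClassK (φ : ℝ → ℝ) : Prop :=
  ContinuousOn φ (Set.Ici 0) ∧ StrictMonoOn φ (Set.Ici 0) ∧ φ 0 = 0 ∧ ∀ t, 0 ≤ t → 0 ≤ φ t

private lemma my_sqrt_add (x y : ℝ) (hx : 0 ≤ x) (hy : 0 ≤ y) :
    Real.sqrt (x + y) ≤ Real.sqrt x + Real.sqrt y := by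
  rw [show x + y = Real.sqrt x ^ 2 + Real.sqrt y ^ 2 by
    rw [Real.sq_sqrt hx, Real.sq_sqrt hy]]
  have h1 := Real.sqrt_nonneg x
  have h2 := Real.sqrt_nonneg y
  nlinarith [Real.sqrt_le_sqrt (show Real.sqrt x ^ 2 + Real.sqrt y ^ 2 ≤ (Real.sqrt x + Real.sqrt y)^2 by nlinarith),
    Real.sqrt_sq (add_nonneg h1 h2)]

private lemma my_sqrt_sum (n : ℕ) (f : ℕ → ℝ) (hf : ∀ i, 0 ≤ f i) :
    Real.sqrt (∑ i ∈ Finset.range n, f i) ≤ ∑ i ∈ Finset.range n, Real.sqrt (f i) := by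
  induction n with
  | zero => simp
  | succ n ih =>
    rw [Finset.sum_range_succ, Finset.sum_range_succ]
    calc Real.sqrt (∑ i ∈ Finset.range n, f i + f n)
        ≤ Real.sqrt (∑ i ∈ Finset.range n, f i) + Real.sqrt (f n) :=
          my_sqrt_add _ _ (Finset.sum_nonneg fun i _ => hf i) (hf n)
      _ ≤ _ := by linarith

set_option maxRecDepth 8000 in
/-- **Joint Lyapunov / small-gain theorem (Theorem 3, trajectory form).** -/
theorem joint_lyapunov_small_gain
    {p q m : ℕ} (a1 a2 a3 a4 c1 c2 c3 c4 : ℝ)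
    (ha1 : 0 < a1) (ha2 : 0 < a2) (ha3 : 0 < a3) (ha4 : 0 < a4)
    (hc1 : 0 < c1) (hc2 : 0 < c2) (hc3 : 0 < c3) (hc4 : 0 < c4)
    (hc32 : c3 < c2)
    (hsg1 : a4 * c4 / (a3 * c1) < 1)
    (hsg2 : a4 * c4 / (a3 * c3) < c1 / (c1 + c2))
    (σ σε : ℝ → ℝ) (hσ : IsClassK σ) (hσε : IsClassK σε) :
    ∃ (cζ lamζ : ℝ) (σζ : ℝ → ℝ), 0 < cζ ∧ lamζ ∈ Set.Ioo (0 : ℝ) 1 ∧ IsClassK σζ ∧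
      ∀ (ζ : ℕ → Vec p) (ε : ℕ → Vec q) (ω : ℕ → Vec m) (V Vε : ℕ → ℝ),
        (∀ k, 0 ≤ V k) → (∀ k, 0 ≤ Vε k) →
        (∀ k, a1 * ‖ζ k‖ ^ 2 ≤ V k) → (∀ k, V k ≤ a2 * ‖ζ k‖ ^ 2) →
        (∀ k, V (k + 1) ≤ V k - a3 * ‖ζ k‖ ^ 2 +
          a4 * (‖ε k‖ ^ 2 + ‖ε (k + 1)‖ ^ 2) + σ ‖ω k‖) →
        (∀ k, c1 * ‖ε k‖ ^ 2 ≤ Vε k) → (∀ k, Vε k ≤ c2 * ‖ε k‖ ^ 2) →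
        (∀ k, Vε (k + 1) ≤ Vε k - c3 * ‖ε k‖ ^ 2 + c4 * ‖ζ k‖ ^ 2 + σε ‖ω k‖) →
        ∀ k : ℕ, Real.sqrt (‖ζ k‖ ^ 2 + ‖ε k‖ ^ 2) ≤
          cζ * lamζ ^ k * Real.sqrt (‖ζ 0‖ ^ 2 + ‖ε 0‖ ^ 2) +
          ∑ i ∈ Finset.range (k + 1), lamζ ^ i * σζ ‖ω (k - i)‖ := by
  -- basic consequences of the small-gain conditions
  have hA : 0 < a3 * c1 - a4 * c4 := by
    have h := (div_lt_one (mul_pos ha3 hc1)).mp hsg1; linarith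
  have hc123 : 0 < c1 + c2 - c3 := by linarith
  have hD : 0 < (a3 * c1 - a4 * c4) * c3 - a4 * (c1 + c2 - c3) * c4 := by
    have h := (div_lt_div_iff₀ (mul_pos ha3 hc3) (by linarith : (0:ℝ) < c1 + c2)).mp hsg2
    nlinarith
  set μ : ℝ := (a4 * (c1 + c2 - c3) / c3 + (a3 * c1 - a4 * c4) / c4) / 2 with hμdef
  have hμ : 0 < μ := by
    have h1 := div_pos (mul_pos ha4 hc123) hc3
    have h2 := div_pos hA hc4
    rw [hμdef]; linarith
  have hδa : 0 < a3 * c1 - a4 * c4 - μ * c4 := by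
    have key : a3 * c1 - a4 * c4 - μ * c4
        = ((a3 * c1 - a4 * c4) * c3 - a4 * (c1 + c2 - c3) * c4) / (2 * c3) := by
      rw [hμdef]; field_simp; ring
    rw [key]; exact div_pos hD (by linarith)
  have hδb : 0 < μ * c3 - a4 * (c1 + c2 - c3) := by
    have key : μ * c3 - a4 * (c1 + c2 - c3)
        = ((a3 * c1 - a4 * c4) * c3 - a4 * (c1 + c2 - c3) * c4) / (2 * c4) := by
      rw [hμdef]; field_simp; ring
    rw [key]; exact div_pos hD (by linarith)
  set δ : ℝ := min (a3 * c1 - a4 * c4 - μ * c4) (μ * c3 - a4 * (c1 + c2 - c3)) with hδdef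
  have hδ : 0 < δ := lt_min hδa hδb
  have hd1 : δ ≤ a3 * c1 - a4 * c4 - μ * c4 := min_le_left _ _
  have hd2 : δ ≤ μ * c3 - a4 * (c1 + c2 - c3) := min_le_right _ _
  set α1 : ℝ := min (c1 * a1) (μ * c1) with hα1def
  set α2 : ℝ := max (c1 * a2) (μ * c2) with hα2def
  have hα1 : 0 < α1 := lt_min (mul_pos hc1 ha1) (mul_pos hμ hc1)
  have hα2 : 0 < α2 := lt_of_lt_of_le (mul_pos hc1 ha2) (le_max_left _ _)
  set ρ : ℝ := max (1 - δ / α2) (1 / 2) with hρdef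
  have hρpos : 0 < ρ := lt_of_lt_of_le one_half_pos (le_max_right _ _)
  have hρlt1 : ρ < 1 := by
    apply max_lt
    · have := div_pos hδ hα2; linarith
    · norm_num
  have hρkey : α2 * (1 - ρ) ≤ δ := by
    have h1 : 1 - δ / α2 ≤ ρ := le_max_left _ _
    calc α2 * (1 - ρ) ≤ α2 * (δ / α2) := mul_le_mul_of_nonneg_left (by linarith) hα2.le
      _ = δ := by field_simp
  set lam : ℝ := Real.sqrt ρ with hlamdef
  have hlampos : 0 < lam := Real.sqrt_pos.mpr hρpos
  have hlamlt1 : lam < 1 := by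
    have h := Real.sqrt_lt_sqrt hρpos.le hρlt1
    rwa [Real.sqrt_one] at h
  have hlam2 : lam ^ 2 = ρ := Real.sq_sqrt hρpos.le
  have hC : (0:ℝ) < a4 + μ := by linarith
  refine ⟨Real.sqrt (α2 / α1), lam,
    fun t => Real.sqrt ((c1 * σ t + (a4 + μ) * σε t) / α1) / lam,
    Real.sqrt_pos.mpr (div_pos hα2 hα1), ⟨hlampos, hlamlt1⟩, ?_, ?_⟩
  · -- class 𝒦
    refine ⟨?_, ?_, ?_, ?_⟩
    · apply ContinuousOn.div_const
      apply Real.continuous_sqrt.comp_continuousOn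
      apply ContinuousOn.div_const
      exact (continuousOn_const.mul hσ.1).add (continuousOn_const.mul hσε.1)
    · intro x hx y hy hxy
      have h1 := mul_lt_mul_of_pos_left (hσ.2.1 hx hy hxy) hc1
      have h2 := mul_lt_mul_of_pos_left (hσε.2.1 hx hy hxy) hC
      have hnn : 0 ≤ (c1 * σ x + (a4 + μ) * σε x) / α1 :=
        div_nonneg (add_nonneg (mul_nonneg hc1.le (hσ.2.2.2 x hx))
          (mul_nonneg hC.le (hσε.2.2.2 x hx))) hα1.le
      apply (div_lt_div_iff_of_pos_right hlampos).mpr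
      apply Real.sqrt_lt_sqrt hnn
      apply (div_lt_div_iff_of_pos_right hα1).mpr
      linarith
    · simp [hσ.2.2.1, hσε.2.2.1]
    · intro t ht
      exact div_nonneg (Real.sqrt_nonneg _) hlampos.le
  · -- trajectory estimate
    intro ζ ε ω V Vε hV0 hVε0 hVl hVu hVd hVεl hVεu hVεd
    set W : ℕ → ℝ := fun k => c1 * V k + μ * Vε k with hWdef
    set S : ℕ → ℝ := fun k => c1 * σ ‖ω k‖ + (a4 + μ) * σε ‖ω k‖ with hSdef
    have hσnn : ∀ k : ℕ, 0 ≤ σ ‖ω k‖ := fun k => hσ.2.2.2 _ (norm_nonneg _)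
    have hσεnn : ∀ k : ℕ, 0 ≤ σε ‖ω k‖ := fun k => hσε.2.2.2 _ (norm_nonneg _)
    have hSnn : ∀ k, 0 ≤ S k := fun k =>
      add_nonneg (mul_nonneg hc1.le (hσnn k)) (mul_nonneg hC.le (hσεnn k))
    have hWnn : ∀ k, 0 ≤ W k := fun k =>
      add_nonneg (mul_nonneg hc1.le (hV0 k)) (mul_nonneg hμ.le (hVε0 k))
    have hWl : ∀ k, α1 * (‖ζ k‖ ^ 2 + ‖ε k‖ ^ 2) ≤ W k := by
      intro k
      have h1 := mul_le_mul_of_nonneg_left (hVl k) hc1.le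
      have h2 := mul_le_mul_of_nonneg_left (hVεl k) hμ.le
      have h3 : α1 ≤ c1 * a1 := min_le_left _ _
      have h4 : α1 ≤ μ * c1 := min_le_right _ _
      have h5 := mul_le_mul_of_nonneg_right h3 (sq_nonneg ‖ζ k‖)
      have h6 := mul_le_mul_of_nonneg_right h4 (sq_nonneg ‖ε k‖)
      simp only [hWdef]
      linarith
    have hWu : ∀ k, W k ≤ α2 * (‖ζ k‖ ^ 2 + ‖ε k‖ ^ 2) := by
      intro k
      have h1 := mul_le_mul_of_nonneg_left (hVu k) hc1.le
      have h2 := mul_le_mul_of_nonneg_left (hVεu k) hμ.le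
      have h3 : c1 * a2 ≤ α2 := le_max_left _ _
      have h4 : μ * c2 ≤ α2 := le_max_right _ _
      have h5 := mul_le_mul_of_nonneg_right h3 (sq_nonneg ‖ζ k‖)
      have h6 := mul_le_mul_of_nonneg_right h4 (sq_nonneg ‖ε k‖)
      simp only [hWdef]
      linarith
    have hstep : ∀ k, W (k + 1) ≤ ρ * W k + S k := by
      intro k
      have hlin : c1 * ‖ε (k + 1)‖ ^ 2
          ≤ (c2 - c3) * ‖ε k‖ ^ 2 + c4 * ‖ζ k‖ ^ 2 + σε ‖ω k‖ := by
        have h1 := hVεl (k + 1); have h2 := hVεd k; have h3 := hVεu k; linarith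
      have f1 := mul_le_mul_of_nonneg_left (hVd k) hc1.le
      have f2 := mul_le_mul_of_nonneg_left (hVεd k) hμ.le
      have f3 := mul_le_mul_of_nonneg_left hlin ha4.le
      have f4 := mul_le_mul_of_nonneg_right hd1 (sq_nonneg ‖ζ k‖)
      have f5 := mul_le_mul_of_nonneg_right hd2 (sq_nonneg ‖ε k‖)
      have step1 : W (k + 1) ≤ W k - δ * (‖ζ k‖ ^ 2 + ‖ε k‖ ^ 2) + S k := by
        simp only [hWdef, hSdef]
        linarith
      have g1 := mul_le_mul_of_nonneg_left (hWu k) (by linarith : (0:ℝ) ≤ 1 - ρ)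
      have g2 := mul_le_mul_of_nonneg_right hρkey
        (by positivity : (0:ℝ) ≤ ‖ζ k‖ ^ 2 + ‖ε k‖ ^ 2)
      linarith
    have hiter : ∀ k, W k ≤ ρ ^ k * W 0 + ∑ i ∈ Finset.range k, ρ ^ i * S (k - 1 - i) := by
      intro k
      induction k with
      | zero => simp
      | succ n ih =>
        calc W (n + 1) ≤ ρ * W n + S n := hstep n
          _ ≤ ρ * (ρ ^ n * W 0 + ∑ i ∈ Finset.range n, ρ ^ i * S (n - 1 - i)) + S n := by
              have := mul_le_mul_of_nonneg_left ih hρpos.le; linarith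
          _ = ρ ^ (n + 1) * W 0 + ∑ i ∈ Finset.range (n + 1), ρ ^ i * S (n + 1 - 1 - i) := by
              have e1 : ρ * ∑ i ∈ Finset.range n, ρ ^ i * S (n - 1 - i)
                  = ∑ i ∈ Finset.range n, ρ ^ (i + 1) * S (n - 1 - i) := by
                rw [Finset.mul_sum]; exact Finset.sum_congr rfl fun i _ => by ring
              rw [Finset.sum_range_succ']
              simp only [show ∀ j : ℕ, n + 1 - 1 - (j + 1) = n - 1 - j from fun j => by omega,
                show n + 1 - 1 - 0 = n from by omega, pow_zero, one_mul]
              rw [mul_add, e1]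
              ring
    intro k
    have hterm_nn : ∀ i : ℕ, (0:ℝ) ≤ ρ ^ i * S (k - 1 - i) / α1 := by
      intro i
      exact div_nonneg (mul_nonneg (pow_nonneg hρpos.le i) (hSnn _)) hα1.le
    have h1 : Real.sqrt (‖ζ k‖ ^ 2 + ‖ε k‖ ^ 2) ≤ Real.sqrt (W k / α1) := by
      apply Real.sqrt_le_sqrt
      rw [le_div_iff₀ hα1]
      have := hWl k; linarith
    have h2 : W k / α1 ≤ ρ ^ k * W 0 / α1
        + ∑ i ∈ Finset.range k, ρ ^ i * S (k - 1 - i) / α1 := by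
      rw [← Finset.sum_div, ← add_div]
      exact (div_le_div_iff_of_pos_right hα1).mpr (hiter k)
    have h3 := my_sqrt_add (ρ ^ k * W 0 / α1)
      (∑ i ∈ Finset.range k, ρ ^ i * S (k - 1 - i) / α1)
      (div_nonneg (mul_nonneg (pow_nonneg hρpos.le k) (hWnn 0)) hα1.le)
      (Finset.sum_nonneg fun i _ => hterm_nn i)
    have h4 := my_sqrt_sum k (fun i => ρ ^ i * S (k - 1 - i) / α1) hterm_nn
    have h5 : Real.sqrt (ρ ^ k * W 0 / α1)
        ≤ Real.sqrt (α2 / α1) * lam ^ k * Real.sqrt (‖ζ 0‖ ^ 2 + ‖ε 0‖ ^ 2) := by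
      have hpow : (lam ^ k) ^ 2 = ρ ^ k := by rw [← hlam2]; ring
      have e : ρ ^ k * W 0 / α1
          ≤ (lam ^ k) ^ 2 * ((α2 / α1) * (‖ζ 0‖ ^ 2 + ‖ε 0‖ ^ 2)) := by
        rw [hpow]
        have hm := mul_le_mul_of_nonneg_left (hWu 0) (pow_nonneg hρpos.le k)
        rw [show ρ ^ k * ((α2 / α1) * (‖ζ 0‖ ^ 2 + ‖ε 0‖ ^ 2))
            = ρ ^ k * (α2 * (‖ζ 0‖ ^ 2 + ‖ε 0‖ ^ 2)) / α1 by field_simp]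
        exact (div_le_div_iff_of_pos_right hα1).mpr hm
      calc Real.sqrt (ρ ^ k * W 0 / α1)
          ≤ Real.sqrt ((lam ^ k) ^ 2 * ((α2 / α1) * (‖ζ 0‖ ^ 2 + ‖ε 0‖ ^ 2))) :=
            Real.sqrt_le_sqrt e
        _ = lam ^ k * Real.sqrt ((α2 / α1) * (‖ζ 0‖ ^ 2 + ‖ε 0‖ ^ 2)) := by
            rw [Real.sqrt_mul (sq_nonneg _), Real.sqrt_sq (pow_nonneg hlampos.le k)]
        _ = lam ^ k * (Real.sqrt (α2 / α1) * Real.sqrt (‖ζ 0‖ ^ 2 + ‖ε 0‖ ^ 2)) := by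
            rw [Real.sqrt_mul (div_nonneg hα2.le hα1.le)]
        _ = Real.sqrt (α2 / α1) * lam ^ k * Real.sqrt (‖ζ 0‖ ^ 2 + ‖ε 0‖ ^ 2) := by ring
    have h6 : ∀ i : ℕ, Real.sqrt (ρ ^ i * S (k - 1 - i) / α1)
        = lam ^ (i + 1) * (Real.sqrt ((c1 * σ ‖ω (k - 1 - i)‖
            + (a4 + μ) * σε ‖ω (k - 1 - i)‖) / α1) / lam) := by
      intro i
      have hpow : (lam ^ i) ^ 2 = ρ ^ i := by rw [← hlam2]; ring
      have e : ρ ^ i * S (k - 1 - i) / α1 = (lam ^ i) ^ 2 * (S (k - 1 - i) / α1) := by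
        rw [hpow]; ring
      rw [e, Real.sqrt_mul (sq_nonneg _), Real.sqrt_sq (pow_nonneg hlampos.le i)]
      simp only [hSdef]
      rw [pow_succ]
      field_simp
    have hsum : ∑ i ∈ Finset.range k, Real.sqrt (ρ ^ i * S (k - 1 - i) / α1)
        ≤ ∑ i ∈ Finset.range (k + 1), lam ^ i
            * (Real.sqrt ((c1 * σ ‖ω (k - i)‖ + (a4 + μ) * σε ‖ω (k - i)‖) / α1) / lam) := by
      rw [Finset.sum_range_succ']
      have e2 : ∑ j ∈ Finset.range k, lam ^ (j + 1)
            * (Real.sqrt ((c1 * σ ‖ω (k - (j + 1))‖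
                + (a4 + μ) * σε ‖ω (k - (j + 1))‖) / α1) / lam)
          = ∑ j ∈ Finset.range k, lam ^ (j + 1)
            * (Real.sqrt ((c1 * σ ‖ω (k - 1 - j)‖
                + (a4 + μ) * σε ‖ω (k - 1 - j)‖) / α1) / lam) :=
        Finset.sum_congr rfl fun j _ => by rw [show k - (j + 1) = k - 1 - j from by omega]
      rw [e2]
      simp only [pow_zero, one_mul, Nat.sub_zero]
      have hextra : (0:ℝ) ≤ Real.sqrt ((c1 * σ ‖ω k‖
          + (a4 + μ) * σε ‖ω k‖) / α1) / lam :=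
        div_nonneg (Real.sqrt_nonneg _) hlampos.le
      have heq : ∑ i ∈ Finset.range k, Real.sqrt (ρ ^ i * S (k - 1 - i) / α1)
          = ∑ i ∈ Finset.range k, lam ^ (i + 1)
              * (Real.sqrt ((c1 * σ ‖ω (k - 1 - i)‖
                  + (a4 + μ) * σε ‖ω (k - 1 - i)‖) / α1) / lam) :=
        Finset.sum_congr rfl fun i _ => h6 i
      rw [heq]
      linarith
    calc Real.sqrt (‖ζ k‖ ^ 2 + ‖ε k‖ ^ 2) ≤ Real.sqrt (W k / α1) := h1
      _ ≤ Real.sqrt (ρ ^ k * W 0 / α1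
            + ∑ i ∈ Finset.range k, ρ ^ i * S (k - 1 - i) / α1) := Real.sqrt_le_sqrt h2
      _ ≤ Real.sqrt (ρ ^ k * W 0 / α1)
            + ∑ i ∈ Finset.range k, Real.sqrt (ρ ^ i * S (k - 1 - i) / α1) := by linarith
      _ ≤ _ := by
          have := h5; have := hsum; linarith
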